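/- Let n ≥ 1 and (t_j)_{j≥-n} be nonnegative with t_{-n} > 0, Σ_{k≥0} t_{k-n} = 1, Σ_{k≥1} k t_{k-n} < n, and the derivative of z ↦ τ(z)^{1/n} increasing on (0,1), where τ(z) = Σ_{k≥0} t_{k-n} z^k. Then every positive solution (x_k) of x_k = Σ_{j=-n}^{k} t_j x_{k-j} satisfies limsup_{k→∞} x_k < ∞. -/

import Mathlib

open Filter Set Finset

lemma partA (n : ℕ) (hn : 1 ≤ n) (s : ℕ → ℝ) (hs : ∀ k, 0 ≤ s k) (hs0 : 0 < s 0)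
    (hsum : Summable s) (hsum1 : ∑' k, s k = 1)
    (hmom : Summable fun k : ℕ => (k : ℝ) * s k) (hγ : (∑' k : ℕ, (k : ℝ) * s k) < n)
    (hderiv : StrictMonoOn (deriv fun z : ℝ => (∑' k : ℕ, s k * z ^ k) ^ ((n : ℝ)⁻¹))
      (Set.Ioo 0 1)) :
    ∀ z ∈ Set.Ioo (0:ℝ) 1, z ^ n < ∑' k : ℕ, s k * z ^ k := by
  set γ : ℝ := ∑' k : ℕ, (k : ℝ) * s k with hγdef
  have hγ0 : 0 ≤ γ := tsum_nonneg fun k => mul_nonneg (Nat.cast_nonneg k) (hs k)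
  set τ : ℝ → ℝ := fun z => ∑' k : ℕ, s k * z ^ k with hτdef
  have hnR : (0:ℝ) < n := by exact_mod_cast hn
  -- summability for |z| ≤ 1
  have hτsum : ∀ z : ℝ, |z| ≤ 1 → Summable fun k : ℕ => s k * z ^ k := by
    intro z hz
    apply Summable.of_norm_bounded hsum
    intro k
    rw [norm_mul, norm_pow]
    calc ‖s k‖ * ‖z‖ ^ k ≤ ‖s k‖ * 1 := by
          apply mul_le_mul_of_nonneg_left _ (norm_nonneg _)
          exact pow_le_one₀ (norm_nonneg z) (by rwa [Real.norm_eq_abs])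
      _ = s k := by rw [mul_one, Real.norm_eq_abs, abs_of_nonneg (hs k)]
  have hIoosub : ∀ z : ℝ, z ∈ Ioo (-1:ℝ) 1 → |z| ≤ 1 := by
    intro z hz; rw [abs_le]; exact ⟨hz.1.le, hz.2.le⟩
  -- pointwise positivity of τ on [0,1]
  have hτpos : ∀ z : ℝ, 0 ≤ z → z ≤ 1 → 0 < τ z := by
    intro z h0 h1
    have : s 0 * z ^ 0 ≤ τ z := by
      apply Summable.le_tsum (hτsum z (abs_le.2 ⟨by linarith, h1⟩)) 0
      intro k _
      exact mul_nonneg (hs k) (pow_nonneg h0 k)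
    simpa using lt_of_lt_of_le (by simpa using hs0) this
  -- τ ≤ 1 on [0,1]
  have hτle1 : ∀ z : ℝ, 0 ≤ z → z ≤ 1 → τ z ≤ 1 := by
    intro z h0 h1
    rw [← hsum1]
    apply Summable.tsum_le_tsum _ (hτsum z (abs_le.2 ⟨by linarith, h1⟩)) hsum
    intro k
    calc s k * z ^ k ≤ s k * 1 := by
          exact mul_le_mul_of_nonneg_left (pow_le_one₀ h0 h1) (hs k)
      _ = s k := mul_one _
  -- Bernoulli lower bound : 1 - γ*(1-z) ≤ τ z on [0,1]
  have hτlb : ∀ z : ℝ, 0 ≤ z → z ≤ 1 → 1 - γ * (1 - z) ≤ τ z := by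
    intro z h0 h1
    have hsummand : Summable fun k : ℕ => s k + (k : ℝ) * s k * (z - 1) :=
      hsum.add (hmom.mul_right _)
    have h2 : (∑' k : ℕ, (s k + (k : ℝ) * s k * (z - 1))) ≤ τ z := by
      apply Summable.tsum_le_tsum _ hsummand (hτsum z (abs_le.2 ⟨by linarith, h1⟩))
      intro k
      have hb : 1 + (k : ℝ) * (z - 1) ≤ z ^ k := by
        have := one_add_mul_le_pow (a := z - 1) (by linarith) k
        simpa [add_comm] using this
      calc s k + (k:ℝ) * s k * (z-1) = s k * (1 + (k:ℝ) * (z-1)) := by ring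
        _ ≤ s k * z ^ k := mul_le_mul_of_nonneg_left hb (hs k)
    have h3 : (∑' k : ℕ, (s k + (k : ℝ) * s k * (z - 1)))
        = 1 + γ * (z - 1) := by
      rw [Summable.tsum_add hsum (hmom.mul_right _), hsum1, tsum_mul_right]
    rw [h3] at h2
    linarith
  -- tendsto τ → 1 along 𝓝[<] 1
  have hIooMem : Ioo (0:ℝ) 1 ∈ nhdsWithin (1:ℝ) (Iio 1) :=
    Ioo_mem_nhdsLT_of_mem (by constructor <;> norm_num)
  have htend_τ : Tendsto τ (nhdsWithin (1:ℝ) (Iio 1)) (nhds 1) := by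
    have hlow : Tendsto (fun z : ℝ => 1 - γ * (1 - z)) (nhdsWithin (1:ℝ) (Iio 1)) (nhds 1) := by
      have : Tendsto (fun z : ℝ => 1 - γ * (1 - z)) (nhds (1:ℝ)) (nhds (1 - γ * (1-1))) := by
        apply Continuous.tendsto
        continuity
      simp only [sub_self, mul_zero, sub_zero] at this
      exact this.mono_left nhdsWithin_le_nhds
    apply tendsto_of_tendsto_of_tendsto_of_le_of_le' hlow tendsto_const_nhds
    · filter_upwards [hIooMem] with z hz
      exact hτlb z hz.1.le hz.2.le
    · filter_upwards [hIooMem] with z hz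
      exact hτle1 z hz.1.le hz.2.le
  -- derivative of τ
  set D : ℝ → ℝ := fun z => ∑' k : ℕ, s k * ((k : ℝ) * z ^ (k - 1)) with hDdef
  have hmom' : Summable fun k : ℕ => (k : ℝ) * s k := hmom
  have hderivτ : ∀ z ∈ Ioo (-1:ℝ) 1, HasDerivAt τ (D z) z := by
    intro z hz
    show HasDerivAt (fun y : ℝ => ∑' k : ℕ, s k * y ^ k) (∑' k : ℕ, s k * ((k:ℝ) * z ^ (k-1))) z
    apply hasDerivAt_tsum_of_isPreconnected hmom' isOpen_Ioo
      (convex_Ioo (-1:ℝ) 1).isPreconnected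
      (g := fun (k:ℕ) (y:ℝ) => s k * y ^ k)
      (g' := fun (k:ℕ) (y:ℝ) => s k * ((k:ℝ) * y ^ (k-1))) (y₀ := 0)
    · intro k y _
      exact (hasDerivAt_pow k y).const_mul (s k)
    · intro k y hy
      rw [Real.norm_eq_abs, abs_mul, abs_mul]
      rw [abs_of_nonneg (hs k), abs_of_nonneg (Nat.cast_nonneg k : (0:ℝ) ≤ k)]
      calc s k * ((k:ℝ) * |y ^ (k-1)|) ≤ s k * ((k:ℝ) * 1) := by
            apply mul_le_mul_of_nonneg_left _ (hs k)
            apply mul_le_mul_of_nonneg_left _ (Nat.cast_nonneg k)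
            rw [abs_pow]
            exact pow_le_one₀ (abs_nonneg y) (hIoosub y hy)
        _ = (k:ℝ) * s k := by ring
    · norm_num
    · apply Summable.of_nonneg_of_le
        (fun k => mul_nonneg (hs k) (pow_nonneg le_rfl k)) (fun k => ?_) hsum
      calc s k * (0:ℝ) ^ k ≤ s k * 1 :=
            mul_le_mul_of_nonneg_left (pow_le_one₀ le_rfl zero_le_one) (hs k)
        _ = s k := mul_one _
    · exact hz
  -- D ≤ γ on (0,1)
  have hDsum : ∀ z : ℝ, z ∈ Ioo (0:ℝ) 1 → Summable fun k : ℕ => s k * ((k:ℝ) * z ^ (k-1)) := by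
    intro z hz
    apply Summable.of_nonneg_of_le _ _ hmom
    · intro k
      exact mul_nonneg (hs k) (mul_nonneg (Nat.cast_nonneg k) (pow_nonneg hz.1.le _))
    · intro k
      calc s k * ((k:ℝ) * z ^ (k-1)) ≤ s k * ((k:ℝ) * 1) := by
            apply mul_le_mul_of_nonneg_left _ (hs k)
            exact mul_le_mul_of_nonneg_left (pow_le_one₀ hz.1.le hz.2.le) (Nat.cast_nonneg k)
        _ = (k:ℝ) * s k := by ring
  have hDle : ∀ z : ℝ, z ∈ Ioo (0:ℝ) 1 → D z ≤ γ := by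
    intro z hz
    apply Summable.tsum_le_tsum _ (hDsum z hz) hmom
    intro k
    calc s k * ((k:ℝ) * z ^ (k-1)) ≤ s k * ((k:ℝ) * 1) := by
          apply mul_le_mul_of_nonneg_left _ (hs k)
          exact mul_le_mul_of_nonneg_left (pow_le_one₀ hz.1.le hz.2.le) (Nat.cast_nonneg k)
      _ = (k:ℝ) * s k := by ring
  -- tendsto D → γ
  have htend_D : Tendsto D (nhdsWithin (1:ℝ) (Iio 1)) (nhds γ) := by
    rw [tendsto_order]
    constructor
    · intro a ha
      -- pick K with partial sum > a
      have hps : Tendsto (fun K => ∑ k ∈ Finset.range K, (k:ℝ) * s k) atTop (nhds γ) :=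
        hmom.hasSum.tendsto_sum_nat
      obtain ⟨K, hK⟩ := (hps.eventually (eventually_gt_nhds ha)).exists
      -- for z ∈ (0,1) : D z ≥ z^K * partial
      have hlow : ∀ z : ℝ, z ∈ Ioo (0:ℝ) 1 →
          z ^ K * (∑ k ∈ Finset.range K, (k:ℝ) * s k) ≤ D z := by
        intro z hz
        have h1 : ∑ k ∈ Finset.range K, s k * ((k:ℝ) * z ^ (k-1)) ≤ D z :=
          Summable.sum_le_tsum _ (fun k _ => mul_nonneg (hs k)
            (mul_nonneg (Nat.cast_nonneg k) (pow_nonneg hz.1.le _))) (hDsum z hz)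
        refine le_trans ?_ h1
        rw [Finset.mul_sum]
        apply Finset.sum_le_sum
        intro k hk
        have hzk : z ^ K ≤ z ^ (k-1) :=
          pow_le_pow_of_le_one hz.1.le hz.2.le
            (le_trans (Nat.sub_le k 1) (Finset.mem_range.mp hk).le)
        calc z ^ K * ((k:ℝ) * s k) ≤ z ^ (k-1) * ((k:ℝ) * s k) := by
              apply mul_le_mul_of_nonneg_right hzk
              exact mul_nonneg (Nat.cast_nonneg k) (hs k)
          _ = s k * ((k:ℝ) * z ^ (k-1)) := by ring
      have hcont : Tendsto (fun z : ℝ => z ^ K * (∑ k ∈ Finset.range K, (k:ℝ) * s k))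
          (nhdsWithin (1:ℝ) (Iio 1)) (nhds ((1:ℝ) ^ K * (∑ k ∈ Finset.range K, (k:ℝ) * s k))) :=
        (((continuous_pow K).mul continuous_const).tendsto (1:ℝ)).mono_left nhdsWithin_le_nhds
      simp only [one_pow, one_mul] at hcont
      have hev := hcont.eventually (eventually_gt_nhds hK)
      filter_upwards [hev, hIooMem] with z hz1 hz2
      exact lt_of_lt_of_le hz1 (hlow z hz2)
    · intro a ha
      filter_upwards [hIooMem] with z hz
      exact lt_of_le_of_lt (hDle z hz) ha
  -- f and its derivative
  set f : ℝ → ℝ := fun z => τ z ^ ((n:ℝ)⁻¹) with hfdef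
  have hfD : ∀ z ∈ Ioo (0:ℝ) 1,
      HasDerivAt f (D z * ((n:ℝ)⁻¹) * τ z ^ ((n:ℝ)⁻¹ - 1)) z := by
    intro z hz
    apply HasDerivAt.rpow_const (hderivτ z ⟨by linarith [hz.1], hz.2⟩)
    exact Or.inl (ne_of_gt (hτpos z hz.1.le hz.2.le))
  have hderivf_eq : ∀ z ∈ Ioo (0:ℝ) 1,
      deriv f z = D z * ((n:ℝ)⁻¹) * τ z ^ ((n:ℝ)⁻¹ - 1) := by
    intro z hz
    exact (hfD z hz).deriv
  -- tendsto deriv f → γ/n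
  have htend_rpow : Tendsto (fun z => τ z ^ ((n:ℝ)⁻¹ - 1)) (nhdsWithin (1:ℝ) (Iio 1))
      (nhds 1) := by
    have h1 : Tendsto (fun y : ℝ => y ^ ((n:ℝ)⁻¹ - 1)) (nhds (1:ℝ))
        (nhds ((1:ℝ) ^ ((n:ℝ)⁻¹ - 1))) :=
      (Real.continuousAt_rpow_const 1 _ (Or.inl one_ne_zero)).tendsto
    rw [Real.one_rpow] at h1
    exact h1.comp htend_τ
  have htend_derivf : Tendsto (deriv f) (nhdsWithin (1:ℝ) (Iio 1)) (nhds (γ * (n:ℝ)⁻¹)) := by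
    have h1 : Tendsto (fun z => D z * ((n:ℝ)⁻¹) * τ z ^ ((n:ℝ)⁻¹ - 1))
        (nhdsWithin (1:ℝ) (Iio 1)) (nhds (γ * (n:ℝ)⁻¹ * 1)) :=
      (htend_D.mul_const _).mul htend_rpow
    rw [mul_one] at h1
    apply h1.congr'
    filter_upwards [hIooMem] with z hz
    exact (hderivf_eq z hz).symm
  -- deriv f < γ/n on (0,1)
  have hγn1 : γ * (n:ℝ)⁻¹ < 1 := by
    rw [mul_inv_lt_iff₀ hnR, one_mul]
    exact hγ
  have hbound : ∀ w ∈ Ioo (0:ℝ) 1, deriv f w < 1 := by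
    intro w hw
    set w' : ℝ := (w + 1) / 2 with hw'def
    have hw' : w' ∈ Ioo (0:ℝ) 1 := by
      constructor <;> [skip; skip] <;> simp only [hw'def] <;> nlinarith [hw.1, hw.2]
    have hww' : w < w' := by simp only [hw'def]; linarith [hw.2]
    have h1 : deriv f w < deriv f w' := hderiv hw hw' hww'
    have h2 : deriv f w' ≤ γ * (n:ℝ)⁻¹ := by
      by_contra hcon
      push_neg at hcon
      have hev1 := htend_derivf.eventually (eventually_lt_nhds hcon)
      have hev2 : Ioo w' 1 ∈ nhdsWithin (1:ℝ) (Iio 1) :=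
        Ioo_mem_nhdsLT_of_mem ⟨hw'.2, le_refl 1⟩
      obtain ⟨z, hz1, hz2⟩ := (hev1.and (eventually_mem_set.mpr hev2)).exists
      have : deriv f w' < deriv f z :=
        hderiv hw' ⟨lt_trans hw'.1 hz2.1, hz2.2⟩ hz2.1
      linarith
    linarith
  -- g = f - id is strictly decreasing
  set g : ℝ → ℝ := fun z => f z - z with hgdef
  have hganti : StrictAntiOn g (Ioo (0:ℝ) 1) := by
    apply strictAntiOn_of_deriv_neg (convex_Ioo 0 1)
    · intro z hz
      exact ((hfD z hz).sub (hasDerivAt_id z)).continuousAt.continuousWithinAt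
    · rw [interior_Ioo]
      intro z hz
      have : HasDerivAt g (deriv f z - 1) z := by
        rw [hderivf_eq z hz]
        exact ((hfD z hz).sub (hasDerivAt_id z))
      rw [this.deriv]
      linarith [hbound z hz]
  -- g tends to 0
  have htend_f : Tendsto f (nhdsWithin (1:ℝ) (Iio 1)) (nhds 1) := by
    have h1 : Tendsto (fun y : ℝ => y ^ ((n:ℝ)⁻¹)) (nhds (1:ℝ))
        (nhds ((1:ℝ) ^ ((n:ℝ)⁻¹))) :=
      (Real.continuousAt_rpow_const 1 _ (Or.inl one_ne_zero)).tendsto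
    rw [Real.one_rpow] at h1
    exact h1.comp htend_τ
  have htend_g : Tendsto g (nhdsWithin (1:ℝ) (Iio 1)) (nhds 0) := by
    have := htend_f.sub (tendsto_id.mono_left (nhdsWithin_le_nhds (s := Iio (1:ℝ))))
    simpa using this
  -- g > 0 on (0,1)
  have hgpos : ∀ z ∈ Ioo (0:ℝ) 1, 0 < g z := by
    intro z hz
    set w : ℝ := (z + 1) / 2 with hwdef
    have hw : w ∈ Ioo (0:ℝ) 1 := by
      constructor <;> simp only [hwdef] <;> nlinarith [hz.1, hz.2]
    have hzw : z < w := by simp only [hwdef]; linarith [hz.2]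
    have h1 : g w < g z := hganti hz hw hzw
    have h2 : 0 ≤ g w := by
      apply le_of_tendsto htend_g
      filter_upwards [eventually_mem_set.mpr (Ioo_mem_nhdsLT_of_mem (a := w) ⟨hw.2, le_refl 1⟩)]
        with y hy
      exact (hganti hw ⟨lt_trans hw.1 hy.1, hy.2⟩ hy.1).le
    linarith
  -- conclude
  intro z hz
  have h1 : z < τ z ^ ((n:ℝ)⁻¹) := by
    have := hgpos z hz
    simp only [hgdef, sub_pos] at this
    exact this
  have h2 : z ^ n < (τ z ^ ((n:ℝ)⁻¹)) ^ n :=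
    pow_lt_pow_left₀ h1 hz.1.le (by omega)
  calc z ^ n < (τ z ^ ((n:ℝ)⁻¹)) ^ n := h2
    _ = τ z := by
        rw [← Real.rpow_natCast (τ z ^ ((n:ℝ)⁻¹)) n, ← Real.rpow_mul (hτpos z hz.1.le hz.2.le).le,
          inv_mul_cancel₀ (by exact_mod_cast Nat.pos_iff_ne_zero.mp hn : (n:ℝ) ≠ 0),
          Real.rpow_one]

/-- The fundamental generating function inequality (finite form). -/
lemma key_ineq (n : ℕ) (s : ℕ → ℝ) (hs : ∀ k, 0 ≤ s k)
    (x : ℕ → ℝ) (hx : ∀ k, 0 ≤ x k)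
    (hrec' : ∀ m : ℕ, n ≤ m → x (m - n) = ∑ j ∈ Finset.range (m + 1), s j * x (m - j))
    (z : ℝ) (hz0 : 0 ≤ z) (J K : ℕ) (hJ : n ≤ J) (hK : n ≤ K) :
    (∑ j ∈ Finset.range J, s j * z ^ j) *
      (∑ i ∈ Finset.range K, x i * z ^ i - ∑ i ∈ Finset.range n, x i * z ^ i)
      ≤ z ^ n * ∑ i ∈ Finset.range (K + J - n), x i * z ^ i := by
  -- rewrite difference as sum over Ico
  rw [← Finset.sum_Ico_eq_sub _ hK]
  -- RHS rewriting
  have hRHS : z ^ n * ∑ i ∈ Finset.range (K + J - n), x i * z ^ i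
      = ∑ i ∈ Finset.range (K + J - n), ∑ j ∈ Finset.range (i + n + 1),
          z ^ (i + n) * (s j * x (i + n - j)) := by
    rw [Finset.mul_sum]
    apply Finset.sum_congr rfl
    intro i _
    have h1 : x i = ∑ j ∈ Finset.range (i + n + 1), s j * x (i + n - j) := by
      have := hrec' (i + n) (by omega)
      simpa [Nat.add_sub_cancel] using this
    rw [← Finset.mul_sum, ← h1, pow_add]
    ring
  rw [hRHS]
  -- LHS as sum over product
  rw [Finset.sum_mul_sum]
  -- define F on sigma type
  set F : (Σ _ : ℕ, ℕ) → ℝ := fun q => z ^ (q.1 + n) * (s q.2 * x (q.1 + n - q.2)) with hF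
  have hFnn : ∀ q : (Σ _ : ℕ, ℕ), 0 ≤ F q := by
    intro q
    exact mul_nonneg (pow_nonneg hz0 _) (mul_nonneg (hs _) (hx _))
  -- embedding
  set e : ℕ × ℕ → (Σ _ : ℕ, ℕ) := fun p => ⟨p.2 + p.1 - n, p.1⟩ with he
  have hstep1 : ∑ j ∈ Finset.range J, ∑ i ∈ Finset.Ico n K, s j * z ^ j * (x i * z ^ i)
      = ∑ p ∈ (Finset.range J ×ˢ Finset.Ico n K), F (e p) := by
    rw [Finset.sum_product]
    apply Finset.sum_congr rfl
    intro j _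
    apply Finset.sum_congr rfl
    intro i hi
    have hi' : n ≤ i := (Finset.mem_Ico.mp hi).1
    simp only [hF, he]
    have h1 : i + j - n + n = i + j := by omega
    have h3 : i + j - j = i := by omega
    rw [h1, h3, pow_add]
    ring
  rw [hstep1]
  have hinj : ∀ p ∈ (Finset.range J ×ˢ Finset.Ico n K),
      ∀ p' ∈ (Finset.range J ×ˢ Finset.Ico n K), e p = e p' → p = p' := by
    intro p hp p' hp' hee
    simp only [Finset.mem_product, Finset.mem_range, Finset.mem_Ico] at hp hp'
    simp only [he, Sigma.mk.inj_iff, heq_eq_eq] at hee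
    obtain ⟨h1, h2⟩ := hee
    have : p.2 = p'.2 := by omega
    exact Prod.ext (by omega) this
  rw [← Finset.sum_image hinj]
  rw [← Finset.sum_sigma (Finset.range (K + J - n)) (fun i => Finset.range (i + n + 1))
    (fun q => F q)]
  apply Finset.sum_le_sum_of_subset_of_nonneg
  · intro q hq
    simp only [Finset.mem_image] at hq
    obtain ⟨p, hp, rfl⟩ := hq
    simp only [Finset.mem_product, Finset.mem_range, Finset.mem_Ico] at hp
    simp only [Finset.mem_sigma, Finset.mem_range, he]
    omega
  · intro q _ _
    exact hFnn q

lemma sumz (s : ℕ → ℝ) (hs : ∀ k, 0 ≤ s k) (hsum : Summable s)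
    (z : ℝ) (h0 : 0 ≤ z) (h1 : z ≤ 1) : Summable (fun k : ℕ => s k * z ^ k) := by
  apply Summable.of_nonneg_of_le (fun k => mul_nonneg (hs k) (pow_nonneg h0 k))
    (fun k => ?_) hsum
  calc s k * z ^ k ≤ s k * 1 := mul_le_mul_of_nonneg_left (pow_le_one₀ h0 h1) (hs k)
    _ = s k := mul_one _

lemma Xmono' (x : ℕ → ℝ) (hx : ∀ k, 0 ≤ x k) (z : ℝ) (hz : 0 ≤ z) :
    Monotone (fun N => ∑ i ∈ Finset.range N, x i * z ^ i) := by
  intro a b hab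
  apply Finset.sum_le_sum_of_subset_of_nonneg (Finset.range_subset_range.mpr hab)
  intro i _ _
  exact mul_nonneg (hx i) (pow_nonneg hz i)


/-- The trivial geometric a priori bound gives boundedness of partial sums for small `z`. -/
lemma geom_bound (n : ℕ) (s : ℕ → ℝ) (x : ℕ → ℝ) (hn : 1 ≤ n) (hs0 : 0 < s 0)
    (hx : ∀ k, 0 ≤ x k)
    (hstep : ∀ m : ℕ, n ≤ m → s 0 * x m ≤ x (m - n))
    (z : ℝ) (hz0 : 0 < z) (hz1 : z ≤ 1) (hzs : z ^ n < s 0) :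
    ∃ b : ℝ, ∀ N, ∑ i ∈ Finset.range N, x i * z ^ i ≤ b := by
  set w : ℝ := z ^ n / s 0 with hw
  have hw0 : 0 ≤ w := div_nonneg (pow_nonneg hz0.le n) hs0.le
  have hw1 : w < 1 := (div_lt_one hs0).mpr hzs
  set B0 : ℝ := ∑ i ∈ Finset.range n, x i with hB0
  have hB0nn : 0 ≤ B0 := Finset.sum_nonneg fun i _ => hx i
  -- pointwise bound
  have hpt : ∀ k, x k * z ^ k ≤ B0 * w ^ (k / n) := by
    intro k
    induction k using Nat.strong_induction_on with
    | _ k ih =>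
      rcases lt_or_ge k n with hk | hk
      · have h1 : k / n = 0 := Nat.div_eq_of_lt hk
        rw [h1, pow_zero, mul_one]
        have h2 : x k ≤ B0 := Finset.single_le_sum (fun i _ => hx i)
          (Finset.mem_range.mpr hk)
        calc x k * z ^ k ≤ x k * 1 := by
              exact mul_le_mul_of_nonneg_left (pow_le_one₀ hz0.le hz1) (hx k)
          _ = x k := mul_one _
          _ ≤ B0 := h2
      · have hd : k / n = (k - n) / n + 1 := by
          rw [← Nat.add_div_right _ (by omega : 0 < n), Nat.sub_add_cancel hk]
        have h1 : x k * z ^ k ≤ (x (k - n) * z ^ (k - n)) * w := by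
          have h2 : z ^ k = z ^ (k - n) * z ^ n := by
            rw [← pow_add, Nat.sub_add_cancel hk]
          rw [h2, hw]
          rw [div_eq_mul_inv]
          have h3 : s 0 * x k ≤ x (k - n) := hstep k hk
          have h4 : x k ≤ x (k - n) / s 0 := (le_div_iff₀ hs0).mpr (by linarith)
          calc x k * (z ^ (k - n) * z ^ n)
              ≤ (x (k - n) / s 0) * (z ^ (k - n) * z ^ n) := by
                apply mul_le_mul_of_nonneg_right h4
                positivity
            _ = x (k - n) * z ^ (k - n) * (z ^ n * (s 0)⁻¹) := by
                field_simp
        have h5 := ih (k - n) (by omega)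
        calc x k * z ^ k ≤ (x (k - n) * z ^ (k - n)) * w := h1
          _ ≤ (B0 * w ^ ((k - n) / n)) * w := by
              apply mul_le_mul_of_nonneg_right h5 hw0
          _ = B0 * w ^ (k / n) := by rw [hd, pow_succ]; ring
  -- sum bound
  refine ⟨B0 * (n * (1 - w)⁻¹), ?_⟩
  intro N
  have h1 : ∑ i ∈ Finset.range N, x i * z ^ i ≤ ∑ i ∈ Finset.range N, B0 * w ^ (i / n) := by
    exact Finset.sum_le_sum fun i _ => hpt i
  have h2 : ∀ L : ℕ, ∑ i ∈ Finset.range (n * L), w ^ (i / n) = n * ∑ l ∈ Finset.range L, w ^ l := by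
    intro L
    induction L with
    | zero => simp
    | succ L ihL =>
      rw [Nat.mul_succ, Finset.sum_range_add, ihL, Finset.sum_range_succ]
      have h3 : ∀ i ∈ Finset.range n, w ^ ((n * L + i) / n) = w ^ L := by
        intro i hi
        congr 1
        rw [Nat.mul_add_div (by omega : 0 < n), Nat.div_eq_of_lt (Finset.mem_range.mp hi)]
        omega
      rw [Finset.sum_congr rfl h3, Finset.sum_const, Finset.card_range]
      push_cast
      ring
  have h4 : ∑ i ∈ Finset.range N, w ^ (i / n) ≤ n * ∑ l ∈ Finset.range N, w ^ l := by
    rw [← h2 N]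
    apply Finset.sum_le_sum_of_subset_of_nonneg
    · apply Finset.range_subset_range.mpr
      nlinarith [hn]
    · intro i _ _
      exact pow_nonneg hw0 _
  have h5 : ∑ l ∈ Finset.range N, w ^ l ≤ (1 - w)⁻¹ := by
    rw [geom_sum_eq (by linarith : w ≠ 1)]
    rw [div_le_iff_of_neg (by linarith : w - 1 < 0)]
    have h6 : (1 - w)⁻¹ * (w - 1) = -1 := by
      rw [inv_mul_eq_div, div_eq_iff (by linarith : (1:ℝ) - w ≠ 0)]
      ring
    have : 0 ≤ w ^ N := pow_nonneg hw0 N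
    linarith
  calc ∑ i ∈ Finset.range N, x i * z ^ i
      ≤ ∑ i ∈ Finset.range N, B0 * w ^ (i / n) := h1
    _ = B0 * ∑ i ∈ Finset.range N, w ^ (i / n) := by rw [Finset.mul_sum]
    _ ≤ B0 * (n * (1 - w)⁻¹) := by
        apply mul_le_mul_of_nonneg_left _ hB0nn
        calc ∑ i ∈ Finset.range N, w ^ (i / n) ≤ n * ∑ l ∈ Finset.range N, w ^ l := h4
          _ ≤ n * (1 - w)⁻¹ := by
              apply mul_le_mul_of_nonneg_left h5 (Nat.cast_nonneg n)


set_option maxHeartbeats 2000000 in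
lemma no_blowup (n : ℕ) (hn : 1 ≤ n) (s : ℕ → ℝ) (x : ℕ → ℝ)
    (hs : ∀ k, 0 ≤ s k) (hs0 : 0 < s 0) (hsum : Summable s) (hsum1 : ∑' k, s k = 1)
    (hx : ∀ k, 0 ≤ x k)
    (hrec' : ∀ m : ℕ, n ≤ m → x (m - n) = ∑ j ∈ Finset.range (m + 1), s j * x (m - j))
    (hA : ∀ z ∈ Set.Ioo (0:ℝ) 1, z ^ n < ∑' k : ℕ, s k * z ^ k) :
    ∀ z ∈ Set.Ioo (0:ℝ) 1, ∃ b : ℝ, ∀ N, ∑ i ∈ Finset.range N, x i * z ^ i ≤ b := by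
  have hstep : ∀ m : ℕ, n ≤ m → s 0 * x m ≤ x (m - n) := by
    intro m hm
    rw [hrec' m hm]
    have h0 : (0 : ℕ) ∈ Finset.range (m + 1) := Finset.mem_range.mpr (by omega)
    have := Finset.single_le_sum (f := fun j => s j * x (m - j))
      (fun j _ => mul_nonneg (hs j) (hx _)) h0
    simpa using this
  by_contra hcon
  push_neg at hcon
  obtain ⟨z₀, hz₀I, hz₀u⟩ := hcon
  -- the set of "blow-up" points
  set U : Set ℝ := {z : ℝ | z ∈ Set.Ioo (0:ℝ) 1 ∧
    ∀ b : ℝ, ∃ N, b < ∑ i ∈ Finset.range N, x i * z ^ i} with hU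
  have hz₀U : z₀ ∈ U := by
    refine ⟨hz₀I, fun b => ?_⟩
    obtain ⟨N, hN⟩ := hz₀u b
    exact ⟨N, hN⟩
  have hUlb : ∀ z ∈ U, s 0 ≤ z := by
    rintro z ⟨hzI, hzu⟩
    by_contra hlt
    push_neg at hlt
    have hzn : z ^ n < s 0 := by
      calc z ^ n ≤ z ^ 1 := pow_le_pow_of_le_one hzI.1.le hzI.2.le hn
        _ = z := pow_one z
        _ < s 0 := hlt
    obtain ⟨b, hb⟩ := geom_bound n s x hn hs0 hx hstep z hzI.1 hzI.2.le hzn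
    obtain ⟨N, hN⟩ := hzu b
    exact absurd (hb N) (not_le.mpr hN)
  have hbb : BddBelow U := ⟨s 0, fun z hz => hUlb z hz⟩
  have hUne : U.Nonempty := ⟨z₀, hz₀U⟩
  set ζ : ℝ := sInf U with hζ
  have hζlb : s 0 ≤ ζ := le_csInf hUne hUlb
  have hζub : ζ ≤ z₀ := csInf_le hbb hz₀U
  have hζI : ζ ∈ Set.Ioo (0:ℝ) 1 := ⟨lt_of_lt_of_le hs0 hζlb, lt_of_le_of_lt hζub hz₀I.2⟩
  have hAζ : ζ ^ n < ∑' k : ℕ, s k * ζ ^ k := hA ζ hζI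
  -- choose J
  have htendT : Tendsto (fun J => ∑ j ∈ Finset.range J, s j * ζ ^ j) atTop
      (nhds (∑' k : ℕ, s k * ζ ^ k)) :=
    (sumz s hs hsum ζ hζI.1.le hζI.2.le).hasSum.tendsto_sum_nat
  obtain ⟨J, hJ1, hJ2⟩ :=
    ((htendT.eventually (eventually_gt_nhds hAζ)).and (eventually_ge_atTop (n+1))).exists
  set Δ : ℕ := J - n with hΔdef
  have hΔ1 : 1 ≤ Δ := by omega
  have hJn : n ≤ J := by omega
  have hJnΔ : J = n + Δ := by omega
  -- choose δ
  have hval : ζ ^ (n + Δ) < (∑ j ∈ Finset.range J, s j * ζ ^ j) * ζ ^ Δ := by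
    rw [pow_add]
    exact mul_lt_mul_of_pos_right hJ1 (pow_pos hζI.1 Δ)
  have hc1 : Tendsto (fun d : ℝ => (∑ j ∈ Finset.range J, s j * ζ ^ j) * (ζ - d) ^ Δ)
      (nhds 0) (nhds ((∑ j ∈ Finset.range J, s j * ζ ^ j) * (ζ - 0) ^ Δ)) :=
    (continuous_const.mul (((continuous_const.sub continuous_id).pow Δ))).tendsto 0
  rw [sub_zero] at hc1
  have hev1 := hc1.eventually (eventually_gt_nhds hval)
  have hev2 : ∀ᶠ d in nhds (0:ℝ), d < ζ := eventually_lt_nhds hζI.1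
  obtain ⟨δ, ⟨hδ1, hδ2⟩, hδ0⟩ :=
    (((hev1.and hev2).filter_mono (nhdsWithin_le_nhds (s := Set.Ioi (0:ℝ)))).and
      eventually_mem_nhdsWithin).exists
  rw [Set.mem_Ioi] at hδ0
  -- choose ε via continuity in z
  have hc2 : Tendsto (fun z : ℝ => (∑ j ∈ Finset.range J, s j * z ^ j) * (ζ - δ) ^ Δ
      - z ^ (n + Δ)) (nhds ζ)
      (nhds ((∑ j ∈ Finset.range J, s j * ζ ^ j) * (ζ - δ) ^ Δ - ζ ^ (n + Δ))) :=
    (((continuous_finset_sum (Finset.range J) (fun j _ =>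
      continuous_const.mul (continuous_pow j))).mul continuous_const).sub
      (continuous_pow (n + Δ))).tendsto ζ
  have hev3 := hc2.eventually (eventually_gt_nhds (by linarith : (0:ℝ) <
    (∑ j ∈ Finset.range J, s j * ζ ^ j) * (ζ - δ) ^ Δ - ζ ^ (n + Δ)))
  rw [Metric.eventually_nhds_iff] at hev3
  obtain ⟨ε, hε0, hε⟩ := hev3
  -- choose z* ∈ U with z* < ζ + ε
  have hζε : ζ < ζ + ε := by linarith
  have h8 : sInf U < ζ + ε := by rw [← hζ]; linarith
  obtain ⟨zs, hzsU, hzslt⟩ := (csInf_lt_iff hbb hUne).mp h8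
  have hzsge : ζ ≤ zs := csInf_le hbb hzsU
  have hzsI : zs ∈ Set.Ioo (0:ℝ) 1 := hzsU.1
  have hdist : dist zs ζ < ε := by
    rw [Real.dist_eq, abs_of_nonneg (by linarith)]
    linarith
  have Hstar : 0 < (∑ j ∈ Finset.range J, s j * zs ^ j) * (ζ - δ) ^ Δ - zs ^ (n + Δ) :=
    hε hdist
  -- abbreviations
  set X : ℕ → ℝ := fun N => ∑ i ∈ Finset.range N, x i * zs ^ i with hX
  set Tz : ℝ := ∑ j ∈ Finset.range J, s j * zs ^ j with hTz
  have hTpos : 0 < Tz := by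
    have h0 : (0:ℕ) ∈ Finset.range J := Finset.mem_range.mpr (by omega)
    have h1 : s 0 * zs ^ 0 ≤ Tz :=
      Finset.single_le_sum (f := fun j => s j * zs ^ j)
        (fun j _ => mul_nonneg (hs j) (pow_nonneg hzsI.1.le j)) h0
    simp only [pow_zero, mul_one] at h1
    linarith
  set t : ℝ := Tz / zs ^ n with ht
  set r : ℝ := (ζ - δ) / zs with hr
  have hzspow : (0:ℝ) < zs ^ n := pow_pos hzsI.1 n
  have ht0 : 0 < t := div_pos hTpos hzspow
  have hr0 : 0 < r := div_pos (by linarith) hzsI.1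
  have hr1 : r < 1 := (div_lt_one hzsI.1).mpr (by linarith)
  have hrt : 1 < t * r ^ Δ := by
    rw [ht, hr, div_pow, div_mul_div_comm, lt_div_iff₀ (mul_pos (pow_pos hzsI.1 n) (pow_pos hzsI.1 Δ)), one_mul, ← pow_add]
    linarith
  have ht1 : 1 < t := by
    have h1 : r ^ Δ ≤ 1 := pow_le_one₀ hr0.le hr1.le
    have h2 : t * r ^ Δ ≤ t * 1 := mul_le_mul_of_nonneg_left h1 ht0.le
    rw [mul_one] at h2
    linarith
  set c₁ : ℝ := ∑ i ∈ Finset.range n, x i * zs ^ i with hc₁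
  have hc₁0 : 0 ≤ c₁ := Finset.sum_nonneg fun i _ => mul_nonneg (hx i) (pow_nonneg hzsI.1.le i)
  have hkey2 : ∀ K, n ≤ K → t * (X K - c₁) ≤ X (K + Δ) := by
    intro K hK
    have h1 := key_ineq n s hs x hx hrec' zs hzsI.1.le J K hJn hK
    have h2 : K + J - n = K + Δ := by omega
    rw [h2] at h1
    rw [ht, div_mul_eq_mul_div, div_le_iff₀ hzspow]
    calc Tz * (X K - c₁) ≤ zs ^ n * X (K + Δ) := h1
      _ = X (K + Δ) * zs ^ n := by ring
  set c : ℝ := t * c₁ / (t - 1) with hc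
  have hc0 : 0 ≤ c := div_nonneg (mul_nonneg ht0.le hc₁0) (by linarith)
  have hcid : c * (t - 1) = t * c₁ := by
    rw [hc, div_mul_cancel₀]
    linarith
  obtain ⟨N₀, hN₀⟩ := hzsU.2 c
  set K₀ : ℕ := max N₀ n with hK₀
  have hK₀n : n ≤ K₀ := le_max_right _ _
  have hK₀1 : 1 ≤ K₀ := le_trans hn hK₀n
  have hXmono := Xmono' x hx zs hzsI.1.le
  have haK : c < X K₀ := lt_of_lt_of_le hN₀ (hXmono (le_max_left _ _))
  set a : ℝ := X K₀ - c with ha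
  have ha0 : 0 < a := by simp only [ha]; linarith
  have hgrow : ∀ l : ℕ, t ^ l * a ≤ X (K₀ + l * Δ) - c := by
    intro l
    induction l with
    | zero => simp [ha]
    | succ l ih =>
      have h1 : t * (X (K₀ + l * Δ) - c) ≤ X (K₀ + (l+1) * Δ) - c := by
        have h2 := hkey2 (K₀ + l * Δ) (by omega)
        have h3 : K₀ + l * Δ + Δ = K₀ + (l+1) * Δ := by ring
        rw [h3] at h2
        have h4 : t * (X (K₀ + l * Δ) - c) = t * (X (K₀ + l * Δ) - c₁) - (c * (t-1) - t * c₁) - c := by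
          ring
        rw [hcid] at h4
        rw [h4]
        linarith
      calc t ^ (l+1) * a = t * (t ^ l * a) := by ring
        _ ≤ t * (X (K₀ + l * Δ) - c) := mul_le_mul_of_nonneg_left ih ht0.le
        _ ≤ X (K₀ + (l+1) * Δ) - c := h1
  -- average argument : a big term exists
  have havg : ∀ l : ℕ, ∃ k < K₀ + l * Δ,
      t ^ l * a ≤ ((K₀ + l * Δ : ℕ) : ℝ) * (x k * zs ^ k) := by
    intro l
    by_contra hcon2
    push_neg at hcon2
    set M : ℕ := K₀ + l * Δ with hM
    have hM1 : 1 ≤ M := by omega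
    have hMpos : (0:ℝ) < (M:ℝ) := by exact_mod_cast hM1
    have hsum_lt : ∑ k ∈ Finset.range M, (M:ℝ) * (x k * zs ^ k)
        < ∑ _k ∈ Finset.range M, t ^ l * a := by
      apply Finset.sum_lt_sum_of_nonempty
      · exact Finset.nonempty_range_iff.mpr (by omega)
      · intro k hk
        exact hcon2 k (Finset.mem_range.mp hk)
    rw [← Finset.mul_sum, Finset.sum_const, Finset.card_range, nsmul_eq_mul] at hsum_lt
    have hXMlt : X M < t ^ l * a := by
      have := (mul_lt_mul_iff_right₀ hMpos).mp hsum_lt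
      exact this
    have h9 := hgrow l
    have h10 : X (K₀ + l * Δ) = X M := by rw [hM]
    rw [h10] at h9
    linarith
  -- unboundedness propagates to ζ - δ
  have hzd0 : 0 < ζ - δ := by linarith
  have hzd1 : ζ - δ < 1 := by linarith [hζI.2]
  have hub : ∀ b : ℝ, ∃ N, b < ∑ i ∈ Finset.range N, x i * (ζ - δ) ^ i := by
    intro b
    -- reduce to finding one big term
    suffices h : ∃ k : ℕ, b < x k * (ζ - δ) ^ k by
      obtain ⟨k, hk⟩ := h
      refine ⟨k + 1, lt_of_lt_of_le hk ?_⟩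
      apply Finset.single_le_sum (f := fun i => x i * (ζ - δ) ^ i)
        (fun i _ => mul_nonneg (hx i) (pow_nonneg hzd0.le i))
        (Finset.mem_range.mpr (by omega))
    obtain ⟨ρ, hρ⟩ : ∃ ρ : ℝ, ρ = t * r ^ Δ := ⟨_, rfl⟩
    have hρ1 : 1 < ρ := by rw [hρ]; exact hrt
    obtain ⟨σ, hσ⟩ : ∃ σ : ℝ, σ = Real.sqrt ρ := ⟨_, rfl⟩
    have hρ0 : (0:ℝ) ≤ ρ := by linarith
    have hσσ : σ * σ = ρ := by rw [hσ]; exact Real.mul_self_sqrt hρ0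
    have hσ1 : 1 < σ := by
      rw [hσ, show (1:ℝ) = Real.sqrt 1 by rw [Real.sqrt_one]]
      exact Real.sqrt_lt_sqrt zero_le_one hρ1
    have hσl : ∀ l : ℕ, (l : ℝ) * (σ - 1) ≤ σ ^ l := by
      intro l
      have h1 := one_add_mul_le_pow (a := σ - 1) (by linarith) l
      have h2 : 1 + (σ - 1) = σ := by ring
      rw [h2] at h1
      linarith
    have hρl : ∀ l : ℕ, ((l:ℝ) * (σ - 1)) ^ 2 ≤ ρ ^ l := by
      intro l
      have h1 := hσl l
      have h2 : ρ ^ l = σ ^ l * σ ^ l := by rw [← hσσ]; rw [mul_pow]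
      rw [h2, sq]
      have h3 : 0 ≤ (l:ℝ) * (σ - 1) := mul_nonneg (Nat.cast_nonneg l) (by linarith)
      exact mul_le_mul h1 h1 h3 (pow_nonneg (by linarith) l)
    -- choose l large
    set A : ℝ := a * r ^ K₀ * (σ - 1) ^ 2 with hA'
    have hA0 : 0 < A := by
      rw [hA']
      exact mul_pos (mul_pos ha0 (pow_pos hr0 K₀)) (pow_pos (by linarith) 2)
    obtain ⟨l, hl⟩ := exists_nat_gt (max 1 ((b * (K₀:ℝ) + b * Δ + 1) / A))
    have hl1 : (1:ℝ) ≤ (l:ℝ) := le_of_lt (lt_of_le_of_lt (le_max_left _ _) hl)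
    have hlA : (b * (K₀:ℝ) + b * Δ + 1) < A * l := by
      rw [← div_lt_iff₀' hA0]
      exact lt_of_le_of_lt (le_max_right _ _) hl
    obtain ⟨k, hkM, hkbig⟩ := havg l
    refine ⟨k, ?_⟩
    set M : ℕ := K₀ + l * Δ with hM
    have hMpos : (0:ℝ) < (M:ℝ) := by
      have : 1 ≤ M := by omega
      exact_mod_cast this
    -- x k (ζ-δ)^k ≥ x k zs^k * r^M  (since r < 1, k ≤ M)
    have hterm : x k * zs ^ k * r ^ M ≤ x k * (ζ - δ) ^ k := by
      have h1 : (ζ - δ) ^ k = zs ^ k * r ^ k := by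
        rw [hr, div_pow, mul_div_cancel₀]
        exact pow_ne_zero k (ne_of_gt hzsI.1)
      rw [h1, ← mul_assoc]
      apply mul_le_mul_of_nonneg_left _ (mul_nonneg (hx k) (pow_nonneg hzsI.1.le k))
      exact pow_le_pow_of_le_one hr0.le hr1.le (le_of_lt hkM)
    -- main estimate
    have hmain : b * (M:ℝ) < t ^ l * a * r ^ M := by
      have hrhs0 : 0 < t ^ l * a * r ^ M := mul_pos (mul_pos (pow_pos ht0 l) ha0) (pow_pos hr0 M)
      rcases le_or_gt b 0 with hb | hb
      · have : b * (M:ℝ) ≤ 0 := mul_nonpos_of_nonpos_of_nonneg hb hMpos.le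
        linarith
      have h1 : t ^ l * a * r ^ M = a * r ^ K₀ * ρ ^ l := by
        rw [hρ, mul_pow, ← pow_mul, hM]
        push_cast
        rw [pow_add, pow_mul]
        ring
      rw [h1]
      have h2 : A * (l:ℝ) ^ 2 ≤ a * r ^ K₀ * ρ ^ l := by
        rw [hA']
        calc a * r ^ K₀ * (σ - 1) ^ 2 * (l:ℝ) ^ 2
            = a * r ^ K₀ * (((l:ℝ) * (σ - 1)) ^ 2) := by ring
          _ ≤ a * r ^ K₀ * ρ ^ l := by
              apply mul_le_mul_of_nonneg_left (hρl l) (mul_nonneg ha0.le (pow_nonneg hr0.le K₀))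
      have h3 : b * (M:ℝ) = b * (K₀:ℝ) + b * (Δ:ℝ) * l := by
        rw [hM]
        push_cast
        ring
      have hlpos : (0:ℝ) < (l:ℝ) := by linarith
      have e1 : (b * (K₀:ℝ) + b * (Δ:ℝ) + 1) * (l:ℝ) < A * (l:ℝ) * (l:ℝ) :=
        mul_lt_mul_of_pos_right hlA hlpos
      have e3 : 0 ≤ b * (K₀:ℝ) * ((l:ℝ) - 1) :=
        mul_nonneg (mul_nonneg hb.le (Nat.cast_nonneg K₀)) (by linarith)
      have e4 : A * (l:ℝ) ^ 2 = A * (l:ℝ) * (l:ℝ) := by ring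
      have h4 : b * (K₀:ℝ) + b * (Δ:ℝ) * l < A * (l:ℝ) ^ 2 := by
        rw [e4]
        linarith [e1, e3, hl1]
      linarith
    -- combine
    have h5 : b * (M:ℝ) < (M:ℝ) * (x k * zs ^ k) * r ^ M := by
      calc b * (M:ℝ) < t ^ l * a * r ^ M := hmain
        _ ≤ (M:ℝ) * (x k * zs ^ k) * r ^ M := by
            apply mul_le_mul_of_nonneg_right hkbig (pow_nonneg hr0.le M)
    have h6 : b < x k * zs ^ k * r ^ M := by
      have h7 : b * (M:ℝ) < (M:ℝ) * (x k * zs ^ k * r ^ M) := by linarith [h5]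
      calc b = b * (M:ℝ) / (M:ℝ) := by field_simp
        _ < (M:ℝ) * (x k * zs ^ k * r ^ M) / (M:ℝ) := by
            apply div_lt_div_of_pos_right h7 hMpos
        _ = x k * zs ^ k * r ^ M := mul_div_cancel_left₀ _ (ne_of_gt hMpos)
    exact lt_of_lt_of_le h6 hterm
  -- contradiction with sInf
  have hzdU : (ζ - δ) ∈ U := ⟨⟨hzd0, hzd1⟩, hub⟩
  have : ζ ≤ ζ - δ := csInf_le hbb hzdU
  linarith

set_option maxHeartbeats 1000000 in
lemma linear_growth (n : ℕ) (hn : 1 ≤ n) (s : ℕ → ℝ) (x : ℕ → ℝ)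
    (hs : ∀ k, 0 ≤ s k) (hs0 : 0 < s 0) (hsum : Summable s) (hsum1 : ∑' k, s k = 1)
    (hmom : Summable fun k : ℕ => (k : ℝ) * s k) (hγ : (∑' k : ℕ, (k : ℝ) * s k) < n)
    (hx : ∀ k, 0 ≤ x k)
    (hrec' : ∀ m : ℕ, n ≤ m → x (m - n) = ∑ j ∈ Finset.range (m + 1), s j * x (m - j))
    (hbdd : ∀ z ∈ Set.Ioo (0:ℝ) 1, ∃ b : ℝ, ∀ N, ∑ i ∈ Finset.range N, x i * z ^ i ≤ b) :
    ∃ C : ℝ, 0 ≤ C ∧ ∀ N : ℕ, ∑ i ∈ Finset.range N, x i ≤ C * (N + 1) := by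
  set γ : ℝ := ∑' k : ℕ, (k : ℝ) * s k with hγdef
  have hγ0 : 0 ≤ γ := tsum_nonneg fun k => mul_nonneg (Nat.cast_nonneg k) (hs k)
  have hnR : (0:ℝ) < n := by exact_mod_cast hn
  set C0 : ℝ := ∑ i ∈ Finset.range n, x i with hC0
  have hC0nn : 0 ≤ C0 := Finset.sum_nonneg fun i _ => hx i
  set η : ℝ := ((n:ℝ) - γ) / (2 * (n:ℝ)^2) with hη
  have hη0 : 0 < η := div_pos (by linarith) (by positivity)
  -- Step 1: for z close to 1, partial sums are O(1/(1-z))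
  have hXb : ∀ z ∈ Set.Ioo (0:ℝ) 1, 1 - z ≤ η →
      ∀ N, ∑ i ∈ Finset.range N, x i * z ^ i ≤ 2 * C0 / ((1 - z) * ((n:ℝ) - γ)) := by
    intro z hz hzη
    -- the sup of partial sums
    obtain ⟨b, hb⟩ := hbdd z hz
    have hXbdd : BddAbove (Set.range (fun N => ∑ i ∈ Finset.range N, x i * z ^ i)) := by
      refine ⟨b, ?_⟩
      rintro y ⟨N, rfl⟩
      exact hb N
    set Φ : ℝ := ⨆ N, ∑ i ∈ Finset.range N, x i * z ^ i with hΦ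
    have hΦub : ∀ N, ∑ i ∈ Finset.range N, x i * z ^ i ≤ Φ := fun N =>
      le_ciSup hXbdd N
    have hΦ0 : 0 ≤ Φ := le_trans (by simp) (hΦub 0)
    have hXmono : Monotone (fun N => ∑ i ∈ Finset.range N, x i * z ^ i) := by
      intro p q hpq
      apply Finset.sum_le_sum_of_subset_of_nonneg (Finset.range_subset_range.mpr hpq)
      intro i _ _
      exact mul_nonneg (hx i) (pow_nonneg hz.1.le i)
    set c₁ : ℝ := ∑ i ∈ Finset.range n, x i * z ^ i with hc₁
    have hc₁C0 : c₁ ≤ C0 := by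
      apply Finset.sum_le_sum
      intro i _
      calc x i * z ^ i ≤ x i * 1 :=
            mul_le_mul_of_nonneg_left (pow_le_one₀ hz.1.le hz.2.le) (hx i)
        _ = x i := mul_one _
    have hc₁0 : 0 ≤ c₁ := Finset.sum_nonneg fun i _ =>
      mul_nonneg (hx i) (pow_nonneg hz.1.le i)
    -- the J-limit inequality
    have hJineq : ∀ J, n ≤ J →
        ((∑ j ∈ Finset.range J, s j * z ^ j) - z ^ n) * Φ ≤ c₁ := by
      intro J hJ
      set T : ℝ := ∑ j ∈ Finset.range J, s j * z ^ j with hT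
      have hT0 : 0 < T := by
        have h0 : (0:ℕ) ∈ Finset.range J := Finset.mem_range.mpr (by omega)
        have h1 : s 0 * z ^ 0 ≤ T :=
          Finset.single_le_sum (f := fun j => s j * z ^ j)
            (fun j _ => mul_nonneg (hs j) (pow_nonneg hz.1.le j)) h0
        simp only [pow_zero, mul_one] at h1
        linarith
      have hK : ∀ N, T * (∑ i ∈ Finset.range N, x i * z ^ i) ≤ z ^ n * Φ + T * c₁ := by
        intro N
        set K : ℕ := max N n with hKdef
        have h1 := key_ineq n s hs x hx hrec' z hz.1.le J K hJ (le_max_right _ _)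
        have h2 : T * (∑ i ∈ Finset.range K, x i * z ^ i) ≤ z ^ n * Φ + T * c₁ := by
          have h3 : z ^ n * (∑ i ∈ Finset.range (K + J - n), x i * z ^ i) ≤ z ^ n * Φ :=
            mul_le_mul_of_nonneg_left (hΦub _) (pow_nonneg hz.1.le n)
          nlinarith [h1, h3]
        calc T * (∑ i ∈ Finset.range N, x i * z ^ i)
            ≤ T * (∑ i ∈ Finset.range K, x i * z ^ i) :=
              mul_le_mul_of_nonneg_left (hXmono (le_max_left _ _)) hT0.le
          _ ≤ z ^ n * Φ + T * c₁ := h2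
      have hΦle : Φ ≤ (z ^ n * Φ + T * c₁) / T := by
        apply ciSup_le
        intro N
        rw [le_div_iff₀ hT0]
        calc (∑ i ∈ Finset.range N, x i * z ^ i) * T
            = T * (∑ i ∈ Finset.range N, x i * z ^ i) := by ring
          _ ≤ z ^ n * Φ + T * c₁ := hK N
      rw [le_div_iff₀ hT0] at hΦle
      have hT1 : T ≤ 1 := by
        have e1 : T ≤ ∑ j ∈ Finset.range J, s j := by
          apply Finset.sum_le_sum
          intro j _
          calc s j * z ^ j ≤ s j * 1 :=
                mul_le_mul_of_nonneg_left (pow_le_one₀ hz.1.le hz.2.le) (hs j)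
            _ = s j := mul_one _
        have e2 : ∑ j ∈ Finset.range J, s j ≤ 1 := by
          rw [← hsum1]
          exact Summable.sum_le_tsum _ (fun i _ => hs i) hsum
        linarith
      have hTc : T * c₁ ≤ c₁ := by
        calc T * c₁ ≤ 1 * c₁ := mul_le_mul_of_nonneg_right hT1 hc₁0
          _ = c₁ := one_mul _
      nlinarith [hΦle, hTc]
    -- pass to the limit J → ∞
    have htendT : Tendsto (fun J => ∑ j ∈ Finset.range J, s j * z ^ j) atTop
        (nhds (∑' k : ℕ, s k * z ^ k)) :=
      (sumz s hs hsum z hz.1.le hz.2.le).hasSum.tendsto_sum_nat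
    have hlim : ((∑' k : ℕ, s k * z ^ k) - z ^ n) * Φ ≤ c₁ := by
      have h1 : Tendsto (fun J => ((∑ j ∈ Finset.range J, s j * z ^ j) - z ^ n) * Φ) atTop
          (nhds (((∑' k : ℕ, s k * z ^ k) - z ^ n) * Φ)) :=
        (htendT.sub_const _).mul_const _
      apply le_of_tendsto h1
      filter_upwards [eventually_ge_atTop n] with J hJ
      exact hJineq J hJ
    -- lower bound for τ - z^n
    have hτlb : 1 - γ * (1 - z) ≤ ∑' k : ℕ, s k * z ^ k := by
      have hsummand : Summable fun k : ℕ => s k + (k : ℝ) * s k * (z - 1) :=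
        hsum.add (hmom.mul_right _)
      have h2 : (∑' k : ℕ, (s k + (k : ℝ) * s k * (z - 1)))
          ≤ ∑' k : ℕ, s k * z ^ k := by
        apply Summable.tsum_le_tsum _ hsummand (sumz s hs hsum z hz.1.le hz.2.le)
        intro k
        have hb' : 1 + (k : ℝ) * (z - 1) ≤ z ^ k := by
          have := one_add_mul_le_pow (a := z - 1) (by nlinarith [hz.1, hz.2] : (-2:ℝ) ≤ z - 1) k
          simpa [add_comm] using this
        calc s k + (k:ℝ) * s k * (z-1) = s k * (1 + (k:ℝ) * (z-1)) := by ring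
          _ ≤ s k * z ^ k := mul_le_mul_of_nonneg_left hb' (hs k)
      have h3 : (∑' k : ℕ, (s k + (k : ℝ) * s k * (z - 1)))
          = 1 + γ * (z - 1) := by
        rw [Summable.tsum_add hsum (hmom.mul_right _), hsum1, tsum_mul_right]
      rw [h3] at h2
      linarith
    have hgeo : 1 - z ^ n = (1 - z) * ∑ i ∈ Finset.range n, z ^ i := by
      have := geom_sum_mul z n
      linarith [this]
    have hL : (n:ℝ) - (n:ℝ)^2 * (1 - z) ≤ ∑ i ∈ Finset.range n, z ^ i := by
      have h1 : ∀ i ∈ Finset.range n, 1 - (n:ℝ) * (1 - z) ≤ z ^ i := by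
        intro i hi
        have h2 : 1 + (i : ℝ) * (z - 1) ≤ z ^ i := by
          have := one_add_mul_le_pow (a := z - 1) (by nlinarith [hz.1, hz.2] : (-2:ℝ) ≤ z - 1) i
          simpa [add_comm] using this
        have h3 : (i : ℝ) ≤ (n : ℝ) := by
          exact_mod_cast le_of_lt (Finset.mem_range.mp hi)
        nlinarith [hz.2]
      calc (n:ℝ) - (n:ℝ)^2 * (1-z) = ∑ _i ∈ Finset.range n, (1 - (n:ℝ)*(1-z)) := by
            rw [Finset.sum_const, Finset.card_range, nsmul_eq_mul]
            ring
        _ ≤ ∑ i ∈ Finset.range n, z ^ i := Finset.sum_le_sum h1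
    have hden : (1 - z) * (((n:ℝ) - γ) / 2) ≤ (∑' k : ℕ, s k * z ^ k) - z ^ n := by
      have h1 : (n:ℝ)^2 * (1 - z) ≤ ((n:ℝ) - γ) / 2 := by
        rw [hη, le_div_iff₀ (by positivity : (0:ℝ) < 2 * (n:ℝ)^2)] at hzη
        rw [le_div_iff₀ (by norm_num : (0:ℝ) < 2)]
        nlinarith [hzη]
      have h2 : (∑' k : ℕ, s k * z ^ k) - z ^ n ≥
          (1 - γ * (1 - z)) - (1 - (1 - z) * ∑ i ∈ Finset.range n, z ^ i) := by
        have := hτlb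
        nlinarith [hgeo]
      have h3 : (1 - γ * (1 - z)) - (1 - (1 - z) * ∑ i ∈ Finset.range n, z ^ i)
          = (1 - z) * ((∑ i ∈ Finset.range n, z ^ i) - γ) := by ring
      rw [h3] at h2
      have h4 : (1 - z) * (((n:ℝ) - γ) / 2) ≤ (1 - z) * ((∑ i ∈ Finset.range n, z ^ i) - γ) := by
        apply mul_le_mul_of_nonneg_left _ (by linarith [hz.2])
        nlinarith [hL, h1, hz.2]
      linarith
    -- conclusion for this z
    intro N
    have h5 : ((1 - z) * (((n:ℝ) - γ) / 2)) * Φ ≤ c₁ := by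
      have h6 : ((1 - z) * (((n:ℝ) - γ) / 2)) * Φ ≤
          ((∑' k : ℕ, s k * z ^ k) - z ^ n) * Φ :=
        mul_le_mul_of_nonneg_right hden hΦ0
      linarith [hlim]
    have hpos : 0 < (1 - z) * ((n:ℝ) - γ) := by
      apply mul_pos (by linarith [hz.2]) (by linarith)
    rw [div_eq_mul_inv]
    calc ∑ i ∈ Finset.range N, x i * z ^ i ≤ Φ := hΦub N
      _ ≤ 2 * C0 * ((1 - z) * ((n:ℝ) - γ))⁻¹ := by
          rw [← div_eq_mul_inv, le_div_iff₀ hpos]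
          calc Φ * ((1 - z) * ((n:ℝ) - γ)) = ((1 - z) * (((n:ℝ) - γ) / 2)) * Φ * 2 := by ring
            _ ≤ c₁ * 2 := by linarith [h5]
            _ ≤ 2 * C0 := by linarith [hc₁C0]
  -- Step 2: specialize z = 1 - 1/(m+1)
  obtain ⟨M₀', hM₀'⟩ := exists_nat_gt (1 / η)
  set M₀ : ℕ := M₀' + 1 with hM₀def
  have hM₀1 : 1 ≤ M₀ := by omega
  have hM₀η : 1 / ((M₀:ℝ) + 1) ≤ η := by
    rw [div_le_iff₀ (by positivity : (0:ℝ) < (M₀:ℝ) + 1)]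
    rw [div_lt_iff₀ hη0] at hM₀'
    have h1 : (M₀':ℝ) ≤ (M₀:ℝ) + 1 := by
      rw [hM₀def]; push_cast; linarith
    have h2 : η * (M₀':ℝ) ≤ η * ((M₀:ℝ) + 1) := mul_le_mul_of_nonneg_left h1 hη0.le
    nlinarith [hM₀']
  refine ⟨6 * C0 * ((M₀:ℝ) + 1) / ((n:ℝ) - γ),
    div_nonneg (by positivity) (by linarith), ?_⟩
  intro N
  set m : ℕ := max N M₀ with hm
  have hm1 : 1 ≤ m := le_trans hM₀1 (le_max_right _ _)
  have hmR : (1:ℝ) ≤ (m:ℝ) := by exact_mod_cast hm1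
  set u : ℝ := (m:ℝ) with hu
  have hu1 : (1:ℝ) ≤ u := hmR
  set z : ℝ := 1 - 1 / (u + 1) with hz
  have hfrac : (0:ℝ) < 1 / (u + 1) := by positivity
  have hfrac2 : 1 / (u + 1) ≤ 1/2 := by
    rw [div_le_div_iff₀ (by linarith) (by norm_num)]
    linarith
  have hz1 : z < 1 := by rw [hz]; linarith
  have hz0 : 0 < z := by rw [hz]; linarith
  have hzη : 1 - z ≤ η := by
    rw [hz]
    have h1 : 1 / (u + 1) ≤ 1 / ((M₀:ℝ) + 1) := by
      apply div_le_div_of_nonneg_left one_pos.le (by positivity)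
      have : (M₀:ℝ) ≤ u := by
        rw [hu]; exact_mod_cast le_max_right N M₀
      linarith
    linarith [hM₀η]
  have hXz := hXb z ⟨hz0, hz1⟩ hzη N
  -- z^m ≥ 1/3
  have hz_eq : z = u / (u + 1) := by
    rw [hz]; field_simp; ring
  have hone : (u + 1) / u = 1 + 1/u := by field_simp
  have hpow : (1 + 1/u) ^ m ≤ Real.exp 1 := by
    have h1 : 1 + 1/u ≤ Real.exp (1/u) := by
      have := Real.add_one_le_exp (1/u)
      linarith
    have h2 : (1 + 1/u) ^ m ≤ (Real.exp (1/u)) ^ m :=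
      pow_le_pow_left₀ (by positivity) h1 m
    have h3 : (Real.exp (1/u)) ^ m = Real.exp ((m:ℝ) * (1/u)) := by
      rw [← Real.exp_nat_mul]
    have h4 : (m:ℝ) * (1/u) = 1 := by
      rw [hu, mul_one_div, div_self (by linarith : ((m:ℝ)) ≠ 0)]
    rw [h3, h4] at h2
    exact h2
  have hzm : (1:ℝ)/3 ≤ z ^ m := by
    have h1 : z ^ m = ((1 + 1/u) ^ m)⁻¹ := by
      rw [hz_eq, ← hone, ← inv_pow, inv_div]
    rw [h1]
    have h2 : (0:ℝ) < (1 + 1/u) ^ m := by positivity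
    rw [le_inv_comm₀ (by norm_num) h2]
    calc (1 + 1/u) ^ m ≤ Real.exp 1 := hpow
      _ ≤ 3 := by
          have := Real.exp_one_lt_d9
          linarith
      _ ≤ (1/3 : ℝ)⁻¹ := by norm_num
  -- S_N z^m ≤ X z N
  have hSz : (∑ i ∈ Finset.range N, x i) * z ^ m ≤ ∑ i ∈ Finset.range N, x i * z ^ i := by
    rw [Finset.sum_mul]
    apply Finset.sum_le_sum
    intro i hi
    apply mul_le_mul_of_nonneg_left _ (hx i)
    apply pow_le_pow_of_le_one hz0.le hz1.le
    have : i < N := Finset.mem_range.mp hi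
    have : N ≤ m := le_max_left N M₀
    omega
  have hS0 : 0 ≤ ∑ i ∈ Finset.range N, x i := Finset.sum_nonneg fun i _ => hx i
  have hS3 : ∑ i ∈ Finset.range N, x i ≤ 3 * ∑ i ∈ Finset.range N, x i * z ^ i := by
    have h1 : (∑ i ∈ Finset.range N, x i) * (1/3) ≤ (∑ i ∈ Finset.range N, x i) * z ^ m :=
      mul_le_mul_of_nonneg_left hzm hS0
    linarith [hSz]
  -- final computation
  have h1z : 1 - z = 1 / (u + 1) := by rw [hz]; ring
  have hXz2 : ∑ i ∈ Finset.range N, x i * z ^ i ≤ 2 * C0 * (u + 1) / ((n:ℝ) - γ) := by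
    rw [h1z] at hXz
    calc ∑ i ∈ Finset.range N, x i * z ^ i
        ≤ 2 * C0 / (1 / (u + 1) * ((n:ℝ) - γ)) := hXz
      _ = 2 * C0 * (u + 1) / ((n:ℝ) - γ) := by
          rw [show 1 / (u + 1) * ((n:ℝ) - γ) = ((n:ℝ) - γ) / (u + 1) by ring,
            div_div_eq_mul_div]
  have hmN : u + 1 ≤ ((M₀:ℝ) + 1) * ((N:ℝ) + 1) := by
    have h1 : (m:ℕ) ≤ N + M₀ := by omega
    have h2 : u ≤ (N:ℝ) + (M₀:ℝ) := by
      rw [hu]; exact_mod_cast h1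
    have h3 : (0:ℝ) ≤ (N:ℝ) := Nat.cast_nonneg N
    have h4 : (0:ℝ) ≤ (M₀:ℝ) := Nat.cast_nonneg M₀
    nlinarith
  calc ∑ i ∈ Finset.range N, x i ≤ 3 * ∑ i ∈ Finset.range N, x i * z ^ i := hS3
    _ ≤ 3 * (2 * C0 * (u + 1) / ((n:ℝ) - γ)) := by linarith [hXz2]
    _ = 6 * C0 * (u + 1) / ((n:ℝ) - γ) := by ring
    _ ≤ 6 * C0 * ((M₀:ℝ) + 1) / ((n:ℝ) - γ) * ((N:ℝ) + 1) := by
        rw [div_mul_eq_mul_div, div_le_div_iff₀ (by linarith) (by linarith)]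
        have h5 : 6 * C0 * (u + 1) ≤ 6 * C0 * (((M₀:ℝ) + 1) * ((N:ℝ) + 1)) :=
          mul_le_mul_of_nonneg_left hmN (by positivity)
        nlinarith [h5, hγ, hnR]

set_option maxHeartbeats 1000000 in
lemma record_bound (n : ℕ) (hn : 1 ≤ n) (s : ℕ → ℝ) (x : ℕ → ℝ)
    (hs : ∀ k, 0 ≤ s k) (hs0 : 0 < s 0) (hsum : Summable s) (hsum1 : ∑' k, s k = 1)
    (hx : ∀ k, 0 ≤ x k)
    (hrec : ∀ k : ℕ, x k = ∑ j ∈ Finset.range (k + n + 1), s j * x (k + n - j))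
    (C : ℝ) (hC0 : 0 ≤ C) (hlin : ∀ N : ℕ, ∑ i ∈ Finset.range N, x i ≤ C * (N + 1)) :
    ∃ B : ℝ, ∀ k, x k ≤ B := by
  set IsRec : ℕ → Prop := fun k => ∀ i, i ≤ k → x i ≤ x k with hIsRec
  have hrec0 : IsRec 0 := by
    intro i hi
    interval_cases i
    exact le_refl _
  have hstep : ∀ k, IsRec k → ∃ k', IsRec k' ∧ k < k' ∧ k' ≤ k + n := by
    intro k hk
    have hne : (Finset.Icc (k+1) (k+n)).Nonempty := by
      rw [Finset.nonempty_Icc]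
      omega
    obtain ⟨k', hk'W, hk'max⟩ := Finset.exists_max_image (Finset.Icc (k+1) (k+n)) x hne
    rw [Finset.mem_Icc] at hk'W
    -- x k ≤ x k'
    have hβpos : 0 < ∑ j ∈ Finset.range n, s j := by
      have h0 : (0:ℕ) ∈ Finset.range n := Finset.mem_range.mpr (by omega)
      have := Finset.single_le_sum (f := s) (fun j _ => hs j) h0
      linarith
    have hsplit : x k = (∑ j ∈ Finset.range n, s j * x (k + n - j))
        + ∑ j ∈ Finset.Ico n (k + n + 1), s j * x (k + n - j) := by
      rw [hrec k, ← Finset.sum_range_add_sum_Ico _ (by omega : n ≤ k + n + 1)]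
    have e1 : ∑ j ∈ Finset.range n, s j * x (k + n - j)
        ≤ (∑ j ∈ Finset.range n, s j) * x k' := by
      rw [Finset.sum_mul]
      apply Finset.sum_le_sum
      intro j hj
      have hjn : j < n := Finset.mem_range.mp hj
      apply mul_le_mul_of_nonneg_left _ (hs j)
      apply hk'max
      rw [Finset.mem_Icc]
      omega
    have e2 : ∑ j ∈ Finset.Ico n (k + n + 1), s j * x (k + n - j)
        ≤ (∑ j ∈ Finset.Ico n (k + n + 1), s j) * x k := by
      rw [Finset.sum_mul]
      apply Finset.sum_le_sum
      intro j hj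
      rw [Finset.mem_Ico] at hj
      apply mul_le_mul_of_nonneg_left _ (hs j)
      apply hk
      omega
    have e3 : (∑ j ∈ Finset.range n, s j) + ∑ j ∈ Finset.Ico n (k + n + 1), s j ≤ 1 := by
      rw [Finset.sum_range_add_sum_Ico _ (by omega : n ≤ k + n + 1), ← hsum1]
      exact Summable.sum_le_tsum _ (fun i _ => hs i) hsum
    have hxk' : x k ≤ x k' := by
      have e4 : (∑ j ∈ Finset.Ico n (k + n + 1), s j) * x k
          ≤ (1 - ∑ j ∈ Finset.range n, s j) * x k := by
        apply mul_le_mul_of_nonneg_right _ (hx k)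
        linarith
      have e5 : x k ≤ (∑ j ∈ Finset.range n, s j) * x k'
          + (1 - ∑ j ∈ Finset.range n, s j) * x k := by
        linarith [hsplit, e1, e2, e4]
      have e6 : (∑ j ∈ Finset.range n, s j) * x k ≤ (∑ j ∈ Finset.range n, s j) * x k' := by
        linarith [e5]
      exact le_of_mul_le_mul_left e6 hβpos
    refine ⟨k', ?_, by omega, hk'W.2⟩
    intro i hi
    rcases le_or_gt i k with hik | hik
    · exact le_trans (hk i hik) hxk'
    · apply hk'max
      rw [Finset.mem_Icc]
      omega
  -- build the sequence of records
  choose f hf1 hf2 hf3 using hstep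
  set g : {k : ℕ // IsRec k} → {k : ℕ // IsRec k} :=
    fun p => ⟨f p.1 p.2, hf1 p.1 p.2⟩ with hg
  set q : ℕ → {k : ℕ // IsRec k} := fun i => g^[i] ⟨0, hrec0⟩ with hq
  set r : ℕ → ℕ := fun i => (q i).1 with hrdef
  have hq_succ : ∀ i, q (i+1) = g (q i) := by
    intro i
    rw [hq]
    exact Function.iterate_succ_apply' g i _
  have hr0 : r 0 = 0 := rfl
  have hrRec : ∀ i, IsRec (r i) := fun i => (q i).2
  have hq_val : ∀ i, r (i+1) = f (q i).1 (q i).2 :=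
    fun i => congrArg Subtype.val (hq_succ i)
  have hrlt : ∀ i, r i < r (i+1) := by
    intro i
    rw [hq_val i]
    exact hf2 _ _
  have hrle : ∀ i, r (i+1) ≤ r i + n := by
    intro i
    rw [hq_val i]
    exact hf3 _ _
  have hmono : StrictMono r := strictMono_nat_of_lt_succ hrlt
  have hrbound : ∀ i, r i ≤ n * i := by
    intro i
    induction i with
    | zero => simp [hr0]
    | succ i ih =>
      have := hrle i
      have h2 : n * (i+1) = n * i + n := by ring
      omega
  have hige : ∀ i, i ≤ r i := fun i => hmono.le_apply
  have hxmono : ∀ l i, l ≤ i → x (r l) ≤ x (r i) := by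
    intro l i h
    exact hrRec i (r l) (hmono.monotone h)
  -- x (r i) ≤ C * (2n+2)
  have hrecbd : ∀ i : ℕ, x (r i) ≤ C * (2 * n + 2) := by
    intro i
    have h1 : ∑ l ∈ Finset.Icc i (2*i), x (r l) ≤ ∑ j ∈ Finset.range (r (2*i) + 1), x j := by
      rw [show ∑ l ∈ Finset.Icc i (2*i), x (r l)
          = ∑ j ∈ (Finset.Icc i (2*i)).image r, x j from
        (Finset.sum_image (fun a _ b _ hab => hmono.injective hab)).symm]
      apply Finset.sum_le_sum_of_subset_of_nonneg
      · intro j hj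
        rw [Finset.mem_image] at hj
        obtain ⟨l, hl, rfl⟩ := hj
        rw [Finset.mem_Icc] at hl
        rw [Finset.mem_range]
        have := hmono.monotone hl.2
        omega
      · intro j _ _
        exact hx j
    have h2 : ((i:ℝ) + 1) * x (r i) ≤ ∑ l ∈ Finset.Icc i (2*i), x (r l) := by
      have h3 : ∀ l ∈ Finset.Icc i (2*i), x (r i) ≤ x (r l) := by
        intro l hl
        rw [Finset.mem_Icc] at hl
        exact hxmono i l hl.1
      have h4 := Finset.card_nsmul_le_sum (Finset.Icc i (2*i)) (fun l => x (r l)) (x (r i)) h3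
      rw [Nat.card_Icc] at h4
      have h5 : 2 * i + 1 - i = i + 1 := by omega
      rw [h5, nsmul_eq_mul] at h4
      push_cast at h4
      linarith
    have h6 : ∑ j ∈ Finset.range (r (2*i) + 1), x j ≤ C * (2 * (n:ℝ) * i + 2) := by
      calc ∑ j ∈ Finset.range (r (2*i) + 1), x j ≤ C * ((r (2*i) + 1 : ℕ) + 1) := hlin _
        _ ≤ C * (2 * (n:ℝ) * i + 2) := by
            apply mul_le_mul_of_nonneg_left _ hC0
            have := hrbound (2*i)
            push_cast
            have h7 : (r (2*i) : ℝ) ≤ (n:ℝ) * (2*i) := by exact_mod_cast this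
            linarith
    have h8 : ((i:ℝ) + 1) * x (r i) ≤ C * (2*(n:ℝ)+2) * ((i:ℝ)+1) := by
      have h9 : C * (2 * (n:ℝ) * i + 2) ≤ C * (2*(n:ℝ)+2) * ((i:ℝ)+1) := by
        have hiR : (0:ℝ) ≤ (i:ℝ) := Nat.cast_nonneg i
        have hnR : (1:ℝ) ≤ (n:ℝ) := by exact_mod_cast hn
        nlinarith
      linarith [h1, h2, h6]
    have hipos : (0:ℝ) < (i:ℝ) + 1 := by positivity
    have h10 : x (r i) * ((i:ℝ)+1) ≤ C * (2*(n:ℝ)+2) * ((i:ℝ)+1) := by linarith [h8]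
    exact le_of_mul_le_mul_right h10 hipos
  refine ⟨C * (2*(n:ℝ)+2), fun k => ?_⟩
  calc x k ≤ x (r k) := hrRec k k (hige k)
    _ ≤ C * (2*(n:ℝ)+2) := hrecbd k


/-- Theorem 2 (ii), boundedness: if `τ(1) = 1` and `τ'(1) < n` (and the derivative of
`τ(z)^{1/n}` is increasing), every positive solution of `x = T x` has finite `limsup`. -/
theorem stmt13 (n : ℕ) (hn : 1 ≤ n) (t : ℤ → ℝ)
    (ht : ∀ j : ℤ, -(n : ℤ) ≤ j → 0 ≤ t j) (htn : 0 < t (-(n : ℤ)))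
    (hsum : Summable fun k : ℕ => t ((k : ℤ) - n))
    (hsum1 : (∑' k : ℕ, t ((k : ℤ) - n)) = 1)
    (hmom : Summable fun k : ℕ => (k : ℝ) * t ((k : ℤ) - n))
    (hγ : (∑' k : ℕ, (k : ℝ) * t ((k : ℤ) - n)) < n)
    (hderiv : StrictMonoOn
      (deriv fun z : ℝ => (∑' k : ℕ, t ((k : ℤ) - n) * z ^ k) ^ ((n : ℝ)⁻¹)) (Set.Ioo 0 1))
    (x : ℕ → ℝ) (hxpos : ∀ k, 0 < x k)
    (hrec : ∀ k : ℕ, x k = ∑ j ∈ Finset.range (k + n + 1), t ((j : ℤ) - n) * x (k + n - j)) :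
    Filter.limsup (fun k => ((x k : ℝ) : EReal)) atTop < ⊤ := by
  set s : ℕ → ℝ := fun k : ℕ => t ((k : ℤ) - n) with hsdef
  have hs : ∀ k, 0 ≤ s k := by
    intro k
    apply ht
    omega
  have hs0 : 0 < s 0 := by
    have : ((0:ℕ) : ℤ) - n = -(n:ℤ) := by omega
    simpa [hsdef, this] using htn
  have hsumS : Summable s := hsum
  have hsum1S : ∑' k, s k = 1 := hsum1
  have hmomS : Summable fun k : ℕ => (k : ℝ) * s k := hmom
  have hγS : (∑' k : ℕ, (k : ℝ) * s k) < n := hγ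
  have hx : ∀ k, 0 ≤ x k := fun k => (hxpos k).le
  have hrecS : ∀ k : ℕ, x k = ∑ j ∈ Finset.range (k + n + 1), s j * x (k + n - j) := hrec
  have hrec' : ∀ m : ℕ, n ≤ m → x (m - n) = ∑ j ∈ Finset.range (m + 1), s j * x (m - j) := by
    intro m hm
    have h1 := hrecS (m - n)
    have h2 : m - n + n = m := Nat.sub_add_cancel hm
    rw [h1]
    simp only [h2]
  have hA : ∀ z ∈ Set.Ioo (0:ℝ) 1, z ^ n < ∑' k : ℕ, s k * z ^ k :=
    partA n hn s hs hs0 hsumS hsum1S hmomS hγS hderiv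
  have hbdd : ∀ z ∈ Set.Ioo (0:ℝ) 1, ∃ b : ℝ, ∀ N, ∑ i ∈ Finset.range N, x i * z ^ i ≤ b :=
    no_blowup n hn s x hs hs0 hsumS hsum1S hx hrec' hA
  obtain ⟨C, hC0, hlin⟩ :=
    linear_growth n hn s x hs hs0 hsumS hsum1S hmomS hγS hx hrec' hbdd
  obtain ⟨B, hB⟩ := record_bound n hn s x hs hs0 hsumS hsum1S hx hrecS C hC0 hlin
  have h1 : Filter.limsup (fun k => ((x k : ℝ) : EReal)) atTop ≤ (B : EReal) := by
    refine Filter.limsup_le_of_le (by isBoundedDefault) ?_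
    exact Filter.Eventually.of_forall fun k => EReal.coe_le_coe_iff.mpr (hB k)
  exact lt_of_le_of_lt h1 (EReal.coe_lt_top B)
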